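/- arXiv:1705.03099 — 2 statements merged into one kernel-verified Lean document; each statement's English description precedes it below -/
import Mathlib

section
/- The integral (4/ρ)·∫₀^∞ exp(−2πλ·U(s)) ds converges and equals CRB_LB,W = (c²/(ρ·W_e))·(πλ)^{−γ/2}·Γ(1 − 2/γ)^{−γ/2}·Γ(1 + γ/2). -/
open MeasureTheory Real
open Set Filter

lemma one_sub_exp_neg_le (t : ℝ) : 1 - Real.exp (-t) ≤ t := by
  have := Real.add_one_le_exp (-t)
  linarith

lemma hasDerivAt_u (γ a : ℝ) {r : ℝ} (hr : 0 < r) :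
    HasDerivAt (fun r : ℝ => 1 - Real.exp (-(a * r ^ (-γ))))
      (-(a * γ * r ^ (-γ - 1) * Real.exp (-(a * r ^ (-γ))))) r := by
  have h1 : HasDerivAt (fun r : ℝ => r ^ (-γ)) (-γ * r ^ (-γ - 1)) r :=
    Real.hasDerivAt_rpow_const (Or.inl hr.ne')
  have h2 := (((h1.const_mul a).neg).exp).const_sub 1
  refine h2.congr_deriv ?_
  simp only [Pi.neg_apply]
  ring

lemma rpow_collapse {r : ℝ} (hr : 0 < r) (γ : ℝ) : r ^ (-γ) * r = r ^ (1 - γ) := by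
  rw [show (1:ℝ) - γ = -γ + 1 by ring, Real.rpow_add hr, Real.rpow_one]

lemma inner_integrand_integrable (γ a : ℝ) (hγ : 2 < γ) (ha : 0 < a) :
    IntegrableOn (fun r : ℝ => (1 - Real.exp (-(a * r ^ (-γ)))) * r) (Ioi 0) := by
  set f : ℝ → ℝ := fun r => (1 - Real.exp (-(a * r ^ (-γ)))) * r with hf
  have hmeas : AEStronglyMeasurable f (volume : Measure ℝ) := by
    apply Measurable.aestronglyMeasurable; fun_prop
  have hbd : ∀ r : ℝ, 0 < r → 0 ≤ f r ∧ f r ≤ min r (a * r ^ (1 - γ)) := by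
    intro r hr
    have h0 : (0:ℝ) < a * r ^ (-γ) := by positivity
    have hle : 1 - Real.exp (-(a * r ^ (-γ))) ≤ a * r ^ (-γ) := one_sub_exp_neg_le _
    have hge : 0 ≤ 1 - Real.exp (-(a * r ^ (-γ))) := by
      have : Real.exp (-(a * r ^ (-γ))) ≤ 1 := by rw [Real.exp_le_one_iff]; linarith
      linarith
    have h1 : 1 - Real.exp (-(a * r ^ (-γ))) ≤ 1 := by
      have : 0 < Real.exp (-(a * r ^ (-γ))) := Real.exp_pos _
      linarith
    refine ⟨by positivity, ?_⟩
    show (1 - Real.exp (-(a * r ^ (-γ)))) * r ≤ _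
    refine le_min (by nlinarith) ?_
    calc (1 - Real.exp (-(a * r ^ (-γ)))) * r ≤ (a * r ^ (-γ)) * r := by nlinarith
      _ = a * r ^ (1 - γ) := by rw [mul_assoc, rpow_collapse hr]
  rw [← Ioc_union_Ioi_eq_Ioi (zero_le_one (α := ℝ))]
  refine IntegrableOn.union ?_ ?_
  · refine Measure.integrableOn_of_bounded (M := 1) (by simp) hmeas ?_
    filter_upwards [ae_restrict_mem measurableSet_Ioc] with r hr
    rw [Real.norm_eq_abs, abs_of_nonneg (hbd r hr.1).1]
    exact le_trans (le_trans (hbd r hr.1).2 (min_le_left _ _)) hr.2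
  · have hg : IntegrableOn (fun r : ℝ => a * r ^ (1 - γ)) (Ioi 1) :=
      (integrableOn_Ioi_rpow_of_lt (by linarith) one_pos).const_mul a
    refine Integrable.mono hg (hmeas.restrict) ?_
    filter_upwards [ae_restrict_mem measurableSet_Ioi] with r hr
    have hr0 : (0:ℝ) < r := lt_trans one_pos hr
    rw [Real.norm_eq_abs, Real.norm_eq_abs, abs_of_nonneg (hbd r hr0).1,
      abs_of_nonneg (by positivity : (0:ℝ) ≤ a * r ^ (1 - γ))]
    exact le_trans (hbd r hr0).2 (min_le_right _ _)

lemma subst_lemma (γ a : ℝ) (hγ : 2 < γ) (ha : 0 < a) :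
    IntegrableOn (fun x : ℝ => x ^ (1-γ) * Real.exp (-(a * x ^ (-γ)))) (Ioi 0) ∧
    ∫ x in Ioi (0:ℝ), x ^ (1-γ) * Real.exp (-(a * x ^ (-γ)))
      = a ^ (-(γ-2)/γ) * (1/γ) * Real.Gamma ((γ-2)/γ) := by
  set f : ℝ → ℝ := fun y => y ^ (γ-3) * Real.exp (-a * y ^ γ) with hfdef
  have hfi : IntegrableOn f (Ioi 0) :=
    integrableOn_rpow_mul_exp_neg_mul_rpow (by linarith) (by linarith) ha
  have hfv : ∫ y in Ioi (0:ℝ), f y = a ^ (-(γ-3+1)/γ) * (1/γ) * Real.Gamma ((γ-3+1)/γ) :=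
    integral_rpow_mul_exp_neg_mul_rpow (by linarith) (by linarith) ha
  have key : ∀ x ∈ Ioi (0:ℝ),
      (|(-1:ℝ)| * x ^ ((-1:ℝ)-1)) • f (x ^ (-1:ℝ))
        = x ^ (1-γ) * Real.exp (-(a * x ^ (-γ))) := by
    intro x hx
    have hx0 : (0:ℝ) < x := hx
    simp only [hfdef, smul_eq_mul, abs_neg, abs_one, one_mul]
    rw [← Real.rpow_mul hx0.le, ← Real.rpow_mul hx0.le,
      show ((-1:ℝ))*(γ-3) = 3-γ by ring, show ((-1:ℝ)*γ) = -γ by ring,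
      show ((-1:ℝ)-1) = -2 by norm_num, ← mul_assoc, ← Real.rpow_add hx0,
      show (-2:ℝ)+(3-γ) = 1-γ by ring, neg_mul]
  constructor
  · refine IntegrableOn.congr_fun ?_ key measurableSet_Ioi
    exact (integrableOn_Ioi_comp_rpow_iff f (by norm_num : (-1:ℝ) ≠ 0)).mpr hfi
  · rw [← setIntegral_congr_fun measurableSet_Ioi key,
      integral_comp_rpow_Ioi f (by norm_num : (-1:ℝ) ≠ 0), hfv]
    ring_nf

lemma h_zero_lim (γ a : ℝ) (hγ : 2 < γ) (ha : 0 < a) :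
    Filter.Tendsto (fun r : ℝ => (1 - Real.exp (-(a * r ^ (-γ)))) * (r^2/2))
      (nhdsWithin 0 (Ioi 0)) (nhds 0) := by
  apply squeeze_zero' (g := fun r : ℝ => r^2/2)
  · filter_upwards [self_mem_nhdsWithin] with r (hr : 0 < r)
    have h0 : (0:ℝ) < a * r ^ (-γ) := by positivity
    have : Real.exp (-(a * r ^ (-γ))) ≤ 1 := by rw [Real.exp_le_one_iff]; linarith
    nlinarith
  · filter_upwards [self_mem_nhdsWithin] with r (hr : 0 < r)
    have h1 : 1 - Real.exp (-(a * r ^ (-γ))) ≤ 1 := by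
      have := Real.exp_pos (-(a * r ^ (-γ))); linarith
    nlinarith
  · have : Filter.Tendsto (fun r : ℝ => r^2/2) (nhds 0) (nhds 0) := by
      have := ((continuous_pow 2).div_const (2:ℝ)).tendsto (0:ℝ)
      simpa using this
    exact this.mono_left nhdsWithin_le_nhds

lemma h_infty_lim (γ a : ℝ) (hγ : 2 < γ) (ha : 0 < a) :
    Filter.Tendsto (fun r : ℝ => (1 - Real.exp (-(a * r ^ (-γ)))) * (r^2/2))
      Filter.atTop (nhds 0) := by
  apply squeeze_zero' (g := fun r : ℝ => a/2 * r ^ (-(γ-2)))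
  · filter_upwards [Filter.eventually_gt_atTop 0] with r (hr : 0 < r)
    have h0 : (0:ℝ) < a * r ^ (-γ) := by positivity
    have : Real.exp (-(a * r ^ (-γ))) ≤ 1 := by rw [Real.exp_le_one_iff]; linarith
    nlinarith
  · filter_upwards [Filter.eventually_gt_atTop 0] with r (hr : 0 < r)
    have hle : 1 - Real.exp (-(a * r ^ (-γ))) ≤ a * r ^ (-γ) := one_sub_exp_neg_le _
    have hrpow : r ^ (-γ) * r^2 = r ^ (-(γ-2)) := by
      rw [← Real.rpow_natCast r 2, ← Real.rpow_add hr]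
      norm_num
      rw [show (-γ + 2 : ℝ) = 2 - γ by ring]
    calc (1 - Real.exp (-(a * r ^ (-γ)))) * (r^2/2)
        ≤ (a * r ^ (-γ)) * (r^2/2) := by nlinarith [sq_nonneg r]
      _ = a/2 * r ^ (-(γ-2)) := by rw [← hrpow]; ring
  · have := (tendsto_rpow_neg_atTop (by linarith : (0:ℝ) < γ-2)).const_mul (a/2)
    simpa using this

lemma inner_value (γ a : ℝ) (hγ : 2 < γ) (ha : 0 < a) :
    ∫ r in Ioi (0:ℝ), (1 - Real.exp (-(a * r ^ (-γ)))) * r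
      = Real.Gamma (1 - 2/γ) / 2 * a ^ (2/γ) := by
  have hγ0 : (0:ℝ) < γ := by linarith
  set u : ℝ → ℝ := fun r => 1 - Real.exp (-(a * r ^ (-γ))) with hu_def
  set u' : ℝ → ℝ := fun r => -(a * γ * r ^ (-γ - 1) * Real.exp (-(a * r ^ (-γ)))) with hu'_def
  set v : ℝ → ℝ := fun r => r^2/2 with hv_def
  set v' : ℝ → ℝ := fun r => r with hv'_def
  have hu : ∀ x ∈ Ioi (0:ℝ), HasDerivAt u (u' x) x := fun x hx => hasDerivAt_u γ a hx
  have hv : ∀ x ∈ Ioi (0:ℝ), HasDerivAt v (v' x) x := by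
    intro x hx
    have := (hasDerivAt_pow 2 x).div_const 2
    refine this.congr_deriv ?_
    simp [hv'_def]
    try ring
  have keyuv : ∀ x ∈ Ioi (0:ℝ),
      u' x * v x = (-(a*γ/2)) * (x ^ (1-γ) * Real.exp (-(a * x ^ (-γ)))) := by
    intro x hx
    have hx0 : (0:ℝ) < x := hx
    have : x ^ (-γ-1) * x^2 = x ^ (1-γ) := by
      rw [← Real.rpow_natCast x 2, ← Real.rpow_add hx0]
      congr 1
      push_cast
      ring
    simp only [hu'_def, hv_def]
    rw [← this]; ring
  have hsub := subst_lemma γ a hγ ha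
  have hu'v : IntegrableOn (u' * v) (Ioi 0) := by
    refine IntegrableOn.congr_fun ((hsub.1.const_mul (-(a*γ/2)))) ?_ measurableSet_Ioi
    intro x hx
    exact (keyuv x hx).symm
  have huv' : IntegrableOn (u * v') (Ioi 0) := by
    have := inner_integrand_integrable γ a hγ ha
    refine this.congr_fun ?_ measurableSet_Ioi
    intro x _; rfl
  have hparts := MeasureTheory.integral_Ioi_mul_deriv_eq_deriv_mul hu hv huv' hu'v
    (h_zero_lim γ a hγ ha) (h_infty_lim γ a hγ ha)
  have hIv : ∫ x in Ioi (0:ℝ), u' x * v x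
      = (-(a*γ/2)) * (a ^ (-(γ-2)/γ) * (1/γ) * Real.Gamma ((γ-2)/γ)) := by
    rw [setIntegral_congr_fun measurableSet_Ioi keyuv, integral_const_mul, hsub.2]
  have : ∫ x in Ioi (0:ℝ), u x * v' x
      = (a*γ/2) * (a ^ (-(γ-2)/γ) * (1/γ) * Real.Gamma ((γ-2)/γ)) := by
    rw [hparts, hIv]; ring
  rw [show (∫ r in Ioi (0:ℝ), (1 - Real.exp (-(a * r ^ (-γ)))) * r)
      = ∫ x in Ioi (0:ℝ), u x * v' x from rfl, this]
  have hexp : a * a ^ (-(γ-2)/γ) = a ^ (2/γ) := by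
    nth_rewrite 1 [← Real.rpow_one a]
    rw [← Real.rpow_add ha]
    congr 1
    field_simp
    try ring
  rw [show (1 - 2/γ) = (γ-2)/γ by field_simp, ← hexp]
  field_simp
  try ring

/-- With `U(s) = ∫₀^∞ (1 − exp(−4·s·W_e·r^{−γ}/c²))·r dr`, the integral
`(4/ρ)·∫₀^∞ exp(−2πλ·U(s)) ds` converges and equals
`CRB_LB,W = (c²/(ρ·W_e))·(πλ)^{−γ/2}·Γ(1 − 2/γ)^{−γ/2}·Γ(1 + γ/2)`. -/
theorem wideband_CRB_closed_form (γ We c lam ρ : ℝ)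
    (hγ : 2 < γ) (hWe : 0 < We) (hc : 0 < c) (hlam : 0 < lam) (hρ : 0 < ρ)
    (U : ℝ → ℝ)
    (hU : ∀ s > 0, U s = ∫ r in Set.Ioi (0 : ℝ),
      (1 - Real.exp (-(4 * s * We * r ^ (-γ) / c ^ 2))) * r) :
    IntegrableOn (fun s : ℝ => Real.exp (-(2 * π * lam * U s))) (Set.Ioi 0) ∧
    (4 / ρ) * ∫ s in Set.Ioi (0 : ℝ), Real.exp (-(2 * π * lam * U s))
      = c ^ 2 / (ρ * We) * (π * lam) ^ (-(γ / 2))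
          * Real.Gamma (1 - 2 / γ) ^ (-(γ / 2)) * Real.Gamma (1 + γ / 2) := by
  have hγ0 : (0:ℝ) < γ := by linarith
  have hΓpos : 0 < Real.Gamma (1 - 2/γ) := by
    apply Real.Gamma_pos_of_pos
    have : 2/γ < 1 := (div_lt_one hγ0).mpr hγ
    linarith
  have hK0 : (0:ℝ) < 4 * We / c^2 := by positivity
  set K : ℝ := (4 * We / c^2) ^ (2/γ) with hK
  have hKpos : 0 < K := Real.rpow_pos_of_pos hK0 _
  set b : ℝ := π * lam * Real.Gamma (1 - 2/γ) * K with hb_def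
  have hπ : (0:ℝ) < π := Real.pi_pos
  have hb : 0 < b := by positivity
  -- U value for s > 0
  have hUval : ∀ s : ℝ, s ∈ Ioi (0:ℝ) → 2 * π * lam * U s = b * s ^ (2/γ) := by
    intro s hs
    have hs0 : (0:ℝ) < s := hs
    have ha : (0:ℝ) < 4 * s * We / c^2 := by positivity
    have h1 : U s = Real.Gamma (1 - 2/γ) / 2 * (4 * s * We / c^2) ^ (2/γ) := by
      rw [hU s hs0, ← inner_value γ (4 * s * We / c^2) hγ ha]
      refine setIntegral_congr_fun measurableSet_Ioi (fun r _ => ?_)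
      congr 2
      ring
    have h2 : (4 * s * We / c^2) ^ (2/γ) = K * s ^ (2/γ) := by
      rw [hK, ← Real.mul_rpow hK0.le hs0.le]
      congr 1
      field_simp
    rw [h1, h2]
    ring
  set g : ℝ → ℝ := fun s => Real.exp (-(b * s ^ (2/γ))) with hg_def
  have hEq : ∀ s ∈ Ioi (0:ℝ), Real.exp (-(2 * π * lam * U s)) = g s := by
    intro s hs
    rw [hUval s hs]
  -- integrability of g
  have hgi : IntegrableOn g (Ioi 0) := by
    refine (integrableOn_Ioi_comp_rpow_iff g (by positivity : γ/2 ≠ 0)).mp ?_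
    have base : IntegrableOn (fun x : ℝ => (γ/2) * (x ^ (γ/2-1) * Real.exp (-b * x ^ (1:ℝ))))
        (Ioi 0) :=
      (integrableOn_rpow_mul_exp_neg_mul_rpow (by linarith) one_pos hb).const_mul (γ/2)
    refine base.congr_fun (fun x hx => ?_) measurableSet_Ioi
    have hx0 : (0:ℝ) < x := hx
    have hpow : (x ^ (γ/2)) ^ (2/γ) = x := by
      rw [← Real.rpow_mul hx0.le]
      rw [show (γ/2) * (2/γ) = 1 by field_simp, Real.rpow_one]
    simp only [hg_def, smul_eq_mul, hpow, Real.rpow_one,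
      abs_of_pos (by positivity : (0:ℝ) < γ/2), neg_mul]
    ring
  have hgv : ∫ s in Ioi (0:ℝ), g s = b ^ (-(γ/2)) * Real.Gamma (1 + γ/2) := by
    have := integral_exp_neg_mul_rpow (by positivity : (0:ℝ) < 2/γ) hb
    rw [show ∫ s in Ioi (0:ℝ), g s = ∫ x in Ioi (0:ℝ), Real.exp (-b * x ^ (2/γ)) from ?_, this]
    · rw [show (-1)/(2/γ) = -(γ/2) by field_simp; try ring, show 1/(2/γ) + 1 = 1 + γ/2 by field_simp; try ring]
    · refine setIntegral_congr_fun measurableSet_Ioi (fun x _ => ?_)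
      simp [hg_def, neg_mul]
  constructor
  · exact IntegrableOn.congr_fun hgi (fun s hs => (hEq s hs).symm) measurableSet_Ioi
  · rw [setIntegral_congr_fun measurableSet_Ioi hEq, hgv]
    have hbpow : b ^ (-(γ/2)) = (π*lam) ^ (-(γ/2)) * Real.Gamma (1 - 2/γ) ^ (-(γ/2)) * (c^2/(4*We)) := by
      rw [hb_def, Real.mul_rpow (by positivity) hKpos.le,
        Real.mul_rpow (by positivity) hΓpos.le]
      congr 1
      rw [hK, ← Real.rpow_mul hK0.le, show (2/γ) * (-(γ/2)) = -1 by field_simp,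
        Real.rpow_neg_one]
      field_simp
    rw [hbpow]
    field_simp
end

section
/- The integral (4/ρ)·∫₀^∞ exp(−2πλ·V(s)) ds converges and equals CRB_LB,N = (4/(ρ·γ²))·(πλ·Γ(γ/(γ+2)))^{−(γ/2+1)}·Γ(2 + γ/2). -/
open MeasureTheory Real

open Filter Topology Set

lemma int_rpow_exp {q a : ℝ} (hq : -1 < q) (ha : 0 < a) :
    IntegrableOn (fun x : ℝ => x ^ q * Real.exp (-(a * x))) (Ioi 0) := by
  have := integrableOn_rpow_mul_exp_neg_mul_rpow hq zero_lt_one ha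
  refine this.congr_fun (fun x hx => ?_) measurableSet_Ioi
  beta_reduce
  rw [Real.rpow_one]
  ring_nf

lemma one_sub_exp_le (y : ℝ) : 1 - Real.exp (-y) ≤ y := by
  nlinarith [Real.add_one_le_exp (-y)]

lemma one_sub_exp_nonneg {y : ℝ} (hy : 0 ≤ y) : 0 ≤ 1 - Real.exp (-y) := by
  have : Real.exp (-y) ≤ 1 := Real.exp_le_one_iff.mpr (by linarith)
  linarith

lemma g_integrable {a c : ℝ} (ha : 0 < a) (hc0 : 0 < c) (hc1 : c < 1) :
    IntegrableOn (fun x : ℝ => (1 - Real.exp (-(a * x))) * x ^ (-c - 1)) (Ioi 0) := by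
  have hmeas : AEStronglyMeasurable
      (fun x : ℝ => (1 - Real.exp (-(a * x))) * x ^ (-c - 1)) (volume.restrict (Ioi (0:ℝ))) := by
    apply Measurable.aestronglyMeasurable
    fun_prop
  have h1 : IntegrableOn (fun x : ℝ => (1 - Real.exp (-(a * x))) * x ^ (-c - 1)) (Ioc 0 1) := by
    have hbound : IntegrableOn (fun x : ℝ => a * x ^ (-c)) (Ioc 0 1) := by
      have h := intervalIntegral.intervalIntegrable_rpow' (a := 0) (b := 1) (r := -c) (by linarith)
      exact ((intervalIntegrable_iff_integrableOn_Ioc_of_le zero_le_one).mp h).const_mul a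
    refine Integrable.mono hbound (hmeas.mono_measure (Measure.restrict_mono Ioc_subset_Ioi_self le_rfl)) ?_
    filter_upwards [ae_restrict_mem measurableSet_Ioc] with x hx
    have hx0 : 0 < x := hx.1
    have he : 0 ≤ 1 - Real.exp (-(a * x)) := one_sub_exp_nonneg (by positivity)
    have hr : (0:ℝ) ≤ x ^ (-c - 1) := Real.rpow_nonneg hx0.le _
    simp only [Real.norm_eq_abs]
    rw [abs_of_nonneg (mul_nonneg he hr), abs_of_nonneg (by positivity)]
    calc (1 - Real.exp (-(a * x))) * x ^ (-c - 1)
        ≤ (a * x) * x ^ (-c - 1) := mul_le_mul_of_nonneg_right (one_sub_exp_le _) hr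
      _ = a * x ^ (-c) := by
          rw [mul_assoc]
          congr 1
          rw [← Real.rpow_one_add' hx0.le (by linarith)]
          ring_nf
  have h2 : IntegrableOn (fun x : ℝ => (1 - Real.exp (-(a * x))) * x ^ (-c - 1)) (Ioi 1) := by
    have hbound : IntegrableOn (fun x : ℝ => x ^ (-c - 1)) (Ioi 1) :=
      integrableOn_Ioi_rpow_of_lt (by linarith) one_pos
    refine Integrable.mono hbound (hmeas.mono_measure (Measure.restrict_mono (Ioi_subset_Ioi zero_le_one) le_rfl)) ?_
    filter_upwards [ae_restrict_mem measurableSet_Ioi] with x hx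
    have hx0 : (0:ℝ) < x := lt_trans one_pos hx
    have he1 : 0 ≤ 1 - Real.exp (-(a * x)) := one_sub_exp_nonneg (by positivity)
    have he2 : 1 - Real.exp (-(a * x)) ≤ 1 := by
      have := Real.exp_pos (-(a * x)); linarith
    have hr : (0:ℝ) ≤ x ^ (-c - 1) := Real.rpow_nonneg hx0.le _
    simp only [Real.norm_eq_abs]
    rw [abs_of_nonneg (mul_nonneg he1 hr), abs_of_nonneg hr]
    nlinarith
  have := h1.union h2
  rwa [Ioc_union_Ioi_eq_Ioi zero_le_one] at this


lemma int_exp_rpow_val {a c : ℝ} (ha : 0 < a) (hc1 : c < 1) :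
    ∫ x in Ioi (0:ℝ), Real.exp (-(a * x)) * x ^ (-c)
      = (1 / a) ^ (1 - c) * Real.Gamma (1 - c) := by
  have h := integral_rpow_mul_exp_neg_mul_Ioi (a := 1 - c) (r := a) (by linarith) ha
  rw [← h]
  refine setIntegral_congr_fun measurableSet_Ioi (fun x hx => ?_)
  rw [show (1 : ℝ) - c - 1 = -c by ring]
  ring

lemma int_exp_rpow_integrable {a c : ℝ} (ha : 0 < a) (hc1 : c < 1) :
    IntegrableOn (fun x : ℝ => Real.exp (-(a * x)) * x ^ (-c)) (Ioi 0) := by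
  have := integrableOn_rpow_mul_exp_neg_mul_rpow (s := -c) (p := 1) (b := a)
    (by linarith) zero_lt_one ha
  refine this.congr_fun (fun x hx => ?_) measurableSet_Ioi
  beta_reduce
  rw [Real.rpow_one]
  ring_nf

/-- Key integration-by-parts identity. -/
lemma lemB {a c : ℝ} (ha : 0 < a) (hc0 : 0 < c) (hc1 : c < 1) :
    ∫ x in Ioi (0:ℝ), (1 - Real.exp (-(a * x))) * x ^ (-c - 1)
      = a ^ c * Real.Gamma (1 - c) / c := by
  set F : ℝ → ℝ := fun x => (-(1 / c)) * ((1 - Real.exp (-(a * x))) * x ^ (-c)) with hF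
  set F' : ℝ → ℝ := fun x =>
    (1 - Real.exp (-(a * x))) * x ^ (-c - 1) - (a / c) * (Real.exp (-(a * x)) * x ^ (-c)) with hF'
  have hderiv : ∀ x ∈ Ioi (0:ℝ), HasDerivAt F (F' x) x := by
    intro x hx
    have hx0 : (0:ℝ) < x := hx
    have h1 : HasDerivAt (fun x : ℝ => 1 - Real.exp (-(a * x))) (Real.exp (-(a * x)) * a) x := by
      have := ((hasDerivAt_id x).const_mul a).neg.exp
      simpa using (this.const_sub 1)
    have h2 : HasDerivAt (fun x : ℝ => x ^ (-c)) (-c * x ^ (-c - 1)) x :=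
      Real.hasDerivAt_rpow_const (Or.inl hx0.ne')
    have hd := ((h1.mul h2).const_mul (-(1 / c)))
    refine hd.congr_deriv (Eq.symm ?_)
    have hxc : x ^ (-c) = x ^ (-c - 1) * x := by
      have h6 := Real.rpow_add_one hx0.ne' (-c - 1)
      rw [show (-c - 1 + 1 : ℝ) = -c by ring] at h6
      exact h6
    simp only [hF']
    rw [hxc]
    generalize Real.exp (-(a * x)) = E
    generalize x ^ (-c - 1) = P
    field_simp
    ring
  -- continuity at 0
  have hcont : ContinuousWithinAt F (Ici 0) 0 := by
    rw [ContinuousWithinAt]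
    have hF0 : F 0 = 0 := by simp [hF]
    rw [hF0]
    have hb : ∀ x ∈ Ici (0:ℝ), ‖F x‖ ≤ (1 / c * a) * x ^ (1 - c) := by
      intro x hx
      rcases eq_or_lt_of_le (mem_Ici.mp hx) with h | hx0
      · simp [hF, ← h, Real.zero_rpow (by linarith : (1:ℝ) - c ≠ 0)]
      have he : 0 ≤ 1 - Real.exp (-(a * x)) := one_sub_exp_nonneg (by positivity)
      have hr : (0:ℝ) ≤ x ^ (-c) := Real.rpow_nonneg hx0.le _
      simp only [hF, norm_mul, norm_neg, Real.norm_eq_abs]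
      rw [abs_of_nonneg he, abs_of_nonneg hr, abs_of_nonneg (by positivity : (0:ℝ) ≤ 1/c)]
      have : (1 - Real.exp (-(a * x))) * x ^ (-c) ≤ (a * x) * x ^ (-c) :=
        mul_le_mul_of_nonneg_right (one_sub_exp_le _) hr
      have hxx : x * x ^ (-c) = x ^ (1 - c) := by
        rw [show (1 : ℝ) - c = -c + 1 by ring, Real.rpow_add_one hx0.ne']
        ring
      calc 1/c * ((1 - Real.exp (-(a * x))) * x ^ (-c))
          ≤ 1/c * ((a * x) * x ^ (-c)) := by
            exact mul_le_mul_of_nonneg_left this (by positivity)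
        _ = (1 / c * a) * x ^ (1 - c) := by rw [← hxx]; ring
    have htend : Tendsto (fun x : ℝ => (1 / c * a) * x ^ (1 - c)) (nhdsWithin 0 (Ici 0)) (nhds 0) := by
      have : Tendsto (fun x : ℝ => x ^ (1 - c)) (nhdsWithin 0 (Ici 0)) (nhds 0) := by
        have := (Real.continuousAt_rpow_const 0 (1 - c) (Or.inr (by linarith))).continuousWithinAt
          (s := Ici (0:ℝ))
        simpa [Real.zero_rpow (by linarith : (1:ℝ) - c ≠ 0), ContinuousWithinAt] using this
      simpa using this.const_mul (1 / c * a)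
    refine squeeze_zero_norm' ?_ htend
    filter_upwards [self_mem_nhdsWithin] with x hx using hb x hx
  -- tendsto at top
  have htop : Tendsto F atTop (nhds 0) := by
    have h1 : Tendsto (fun x : ℝ => x ^ (-c)) atTop (nhds 0) :=
      tendsto_rpow_neg_atTop hc0
    have h2 : Tendsto (fun x : ℝ => 1 - Real.exp (-(a * x))) atTop (nhds 1) := by
      have h3 : Tendsto (fun x : ℝ => a * x) atTop atTop :=
        Filter.Tendsto.const_mul_atTop ha tendsto_id
      have h3' : Tendsto (fun x : ℝ => -(a * x)) atTop atBot := tendsto_neg_atBot_iff.mpr h3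
      simpa using (Real.tendsto_exp_atBot.comp h3').const_sub 1
    have h4 := (h2.mul h1).const_mul (-(1 / c))
    rw [hF]
    simpa [one_div, neg_mul] using h4
  have hFint : IntegrableOn F' (Ioi 0) :=
    (g_integrable ha hc0 hc1).sub ((int_exp_rpow_integrable ha hc1).const_mul _)
  have key := integral_Ioi_of_hasDerivAt_of_tendsto hcont hderiv hFint htop
  have hF0 : F 0 = 0 := by simp [hF]
  rw [hF0, sub_zero] at key
  have hsplit : ∫ x in Ioi (0:ℝ), F' x
      = (∫ x in Ioi (0:ℝ), (1 - Real.exp (-(a * x))) * x ^ (-c - 1))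
        - (a / c) * ∫ x in Ioi (0:ℝ), Real.exp (-(a * x)) * x ^ (-c) := by
    rw [integral_sub (g_integrable ha hc0 hc1) ((int_exp_rpow_integrable ha hc1).const_mul _),
      integral_const_mul]
  rw [key] at hsplit
  rw [int_exp_rpow_val ha hc1] at hsplit
  have : (∫ x in Ioi (0:ℝ), (1 - Real.exp (-(a * x))) * x ^ (-c - 1))
      = (a / c) * ((1 / a) ^ (1 - c) * Real.Gamma (1 - c)) := by linarith
  rw [this]
  have h5 : (1/a : ℝ) ^ (1 - c) = a ^ (c - 1) := by
    rw [one_div, ← Real.rpow_neg_one a, ← Real.rpow_mul ha.le]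
    norm_num
  have haa : a * a ^ (c - 1) = a ^ c := by
    rw [show (c:ℝ) = (c - 1) + 1 by ring, Real.rpow_add_one ha.ne']
    ring
  rw [h5]
  rw [show a / c * (a ^ (c-1) * Real.Gamma (1-c)) = (a * a ^ (c-1)) * Real.Gamma (1-c) / c by ring,
    haa]


lemma lemC {a β : ℝ} (ha : 0 < a) (hβ : 2 < β) :
    ∫ r in Ioi (0:ℝ), (1 - Real.exp (-(a * r ^ (-β)))) * r
      = a ^ (2/β) * Real.Gamma (1 - 2/β) / 2 := by
  have hβ0 : (0:ℝ) < β := by linarith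
  have hp : (-1/β : ℝ) ≠ 0 := by
    have : (-1/β : ℝ) < 0 := div_neg_of_neg_of_pos (by norm_num) hβ0
    exact this.ne
  have key := integral_comp_rpow_Ioi (fun y => (1 - Real.exp (-(a * y ^ (-β)))) * y) hp
  rw [← key]
  have hcong : ∀ x ∈ Ioi (0:ℝ),
      (|(-1/β : ℝ)| * x ^ ((-1/β : ℝ) - 1)) •
        ((1 - Real.exp (-(a * (x ^ (-1/β : ℝ)) ^ (-β)))) * x ^ (-1/β : ℝ))
      = (1/β) * ((1 - Real.exp (-(a * x))) * x ^ (-(2/β) - 1)) := by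
    intro x hx
    have hx0 : (0:ℝ) < x := hx
    have habs : |(-1/β : ℝ)| = 1/β := by
      rw [abs_of_neg (div_neg_of_neg_of_pos (by norm_num) hβ0 : (-1/β : ℝ) < 0)]
      ring
    have hxx : (x ^ (-1/β : ℝ)) ^ (-β) = x := by
      rw [← Real.rpow_mul hx0.le, show (-1/β) * (-β) = (1:ℝ) by field_simp, Real.rpow_one]
    have hadd : x ^ ((-1/β : ℝ) - 1) * x ^ (-1/β : ℝ) = x ^ (-(2/β) - 1) := by
      rw [← Real.rpow_add hx0]
      congr 1
      ring
    rw [habs, hxx, smul_eq_mul]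
    calc 1/β * x ^ ((-1/β:ℝ) - 1) * ((1 - Real.exp (-(a * x))) * x ^ (-1/β:ℝ))
        = 1/β * ((1 - Real.exp (-(a * x))) * (x ^ ((-1/β:ℝ) - 1) * x ^ (-1/β:ℝ))) := by ring
      _ = _ := by rw [hadd]
  rw [setIntegral_congr_fun measurableSet_Ioi hcong, integral_const_mul,
    lemB ha (by positivity) (by rw [div_lt_one hβ0]; linarith)]
  field_simp


lemma lemD {b c : ℝ} (hb : 0 < b) (hc0 : 0 < c) (hc1 : c < 1) :
    IntegrableOn (fun x : ℝ => Real.exp (-(b * x ^ c))) (Ioi 0) := by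
  have hf : IntegrableOn (fun y : ℝ => y ^ (1/c - 1) * Real.exp (-(b * y))) (Ioi 0) :=
    int_rpow_exp (by have := one_div_pos.mpr hc0; linarith) hb
  have h2 := (integrableOn_Ioi_comp_rpow_iff' (fun y : ℝ => y ^ (1/c - 1) * Real.exp (-(b * y)))
    (ne_of_gt hc0)).mpr hf
  refine h2.congr_fun (fun x hx => ?_) measurableSet_Ioi
  have hx0 : (0:ℝ) < x := hx
  have h3 : (x ^ c) ^ (1/c - 1 : ℝ) = x ^ (1 - c) := by
    rw [← Real.rpow_mul hx0.le]
    congr 1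
    field_simp
  beta_reduce
  rw [smul_eq_mul, h3, ← mul_assoc, ← Real.rpow_add hx0,
    show c - 1 + (1 - c) = (0:ℝ) by ring, Real.rpow_zero, one_mul]

/-- With `V(s) = ∫₀^∞ (1 − exp(−s·γ²·r^{−γ−2}))·r dr`, the integral
`(4/ρ)·∫₀^∞ exp(−2πλ·V(s)) ds` converges and equals
`CRB_LB,N = (4/(ρ·γ²))·(πλ·Γ(γ/(γ+2)))^{−(γ/2+1)}·Γ(2 + γ/2)`. -/
theorem narrowband_CRB_closed_form (γ lam ρ : ℝ)
    (hγ : 2 < γ) (hlam : 0 < lam) (hρ : 0 < ρ)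
    (V : ℝ → ℝ)
    (hV : ∀ s > 0, V s = ∫ r in Set.Ioi (0 : ℝ),
      (1 - Real.exp (-(s * γ ^ 2 * r ^ (-γ - 2)))) * r) :
    IntegrableOn (fun s : ℝ => Real.exp (-(2 * π * lam * V s))) (Set.Ioi 0) ∧
    (4 / ρ) * ∫ s in Set.Ioi (0 : ℝ), Real.exp (-(2 * π * lam * V s))
      = (4 / (ρ * γ ^ 2)) * (π * lam * Real.Gamma (γ / (γ + 2))) ^ (-(γ / 2 + 1))
          * Real.Gamma (2 + γ / 2) := by
  have hγ0 : (0:ℝ) < γ := by linarith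
  have hγ2 : (0:ℝ) < γ ^ 2 := by positivity
  set c : ℝ := 2 / (γ + 2) with hc
  have hc0 : 0 < c := by positivity
  have hc1 : c < 1 := by rw [hc, div_lt_one (by linarith)]; linarith
  have h1c : 1 - c = γ / (γ + 2) := by rw [hc]; field_simp; ring
  set Γ₀ : ℝ := Real.Gamma (γ / (γ + 2)) with hΓ₀
  have hΓpos : 0 < Γ₀ := Real.Gamma_pos_of_pos (by positivity)
  -- closed form for V
  have hVs : ∀ s ∈ Ioi (0:ℝ), V s = (s * γ ^ 2) ^ c * Γ₀ / 2 := by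
    intro s hs
    have hs0 : (0:ℝ) < s := hs
    rw [hV s hs0]
    have hrw : ∀ r : ℝ, (1 - Real.exp (-(s * γ ^ 2 * r ^ (-γ - 2)))) * r
        = (1 - Real.exp (-(s * γ ^ 2 * r ^ (-(γ + 2))))) * r := by
      intro r; rw [show (-γ - 2 : ℝ) = -(γ + 2) by ring]
    simp only [hrw]
    rw [lemC (by positivity) (by linarith : (2:ℝ) < γ + 2), h1c, ← hΓ₀, ← hc]
  set b : ℝ := π * lam * Γ₀ * (γ ^ 2) ^ c with hb
  have hbpos : 0 < b := by
    have := Real.pi_pos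
    positivity
  -- congruence of integrands
  have hEq : EqOn (fun s : ℝ => Real.exp (-(2 * π * lam * V s)))
      (fun s : ℝ => Real.exp (-(b * s ^ c))) (Ioi 0) := by
    intro s hs
    have hs0 : (0:ℝ) < s := hs
    simp only
    rw [hVs s hs]
    congr 1
    rw [Real.mul_rpow hs0.le hγ2.le, hb]
    ring
  have hInt : IntegrableOn (fun s : ℝ => Real.exp (-(2 * π * lam * V s))) (Ioi 0) :=
    (lemD hbpos hc0 hc1).congr_fun (fun x hx => (hEq hx).symm) measurableSet_Ioi
  refine ⟨hInt, ?_⟩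
  rw [setIntegral_congr_fun measurableSet_Ioi hEq]
  have hval : ∫ s in Ioi (0:ℝ), Real.exp (-(b * s ^ c)) = b ^ (-1/c) * Real.Gamma (1/c + 1) := by
    rw [← integral_exp_neg_mul_rpow hc0 hbpos]
    refine setIntegral_congr_fun measurableSet_Ioi (fun x hx => ?_)
    rw [neg_mul]
  rw [hval]
  have hoc : 1/c = γ/2 + 1 := by rw [hc]; field_simp
  have hGam : Real.Gamma (1/c + 1) = Real.Gamma (2 + γ/2) := by
    rw [hoc, show (γ/2 + 1 + 1 : ℝ) = 2 + γ/2 by ring]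
  have hbpow : b ^ (-1/c) = (π * lam * Γ₀) ^ (-(γ/2 + 1)) * (γ ^ 2)⁻¹ := by
    have hpiL : (0:ℝ) < π * lam * Γ₀ := by have := Real.pi_pos; positivity
    rw [hb, Real.mul_rpow hpiL.le (Real.rpow_nonneg hγ2.le c)]
    have hcne : c ≠ 0 := hc0.ne'
    have h7 : ((γ^2 : ℝ) ^ c) ^ (-1/c) = (γ^2 : ℝ)⁻¹ := by
      rw [← Real.rpow_mul hγ2.le, show c * (-1/c) = (-1 : ℝ) by field_simp, Real.rpow_neg_one]
    rw [h7, neg_div, hoc]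
  rw [hGam, hbpow]
  field_simp
end
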